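/- Suppose a₀ ∈ (0,1), E₀ > 0, and real sequences (a_n)_{n∈ℤ}, (f_n)_{n∈ℤ} (valued in ℝ^{k+1}) satisfy a_n(E₀/(2π) − n²) = f_n with |f_n| ≤ Cδ for all n, and suppose δ_* := dist(E₀, {2πn² : n ∈ ℕ}) > 0 and E₀ ≤ M. Then |a_n| ≤ C′ δ/(δ_* n²) for all n ≠ 0, where C′ depends only on M and C. Consequently, if the function φ̃(x) = Σ a_n e^{inx} satisfies |φ̃(x)| ≥ 1/2 for all x, then δ_* ≤ C″ δ for a constant C″ depending only on M and C. -/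

import Mathlib

open Real

lemma stmt13_zsum : HasSum (fun n : ℤ => 1/(n:ℝ)^2) (π^2/3) := by
  have h1 : HasSum (fun n : ℕ => 1/(n:ℝ)^2) (π^2/6) := hasSum_zeta_two
  have h3 : HasSum (fun n : ℕ => 1/(((n:ℝ))+1)^2) (π^2/6) := by
    have := (hasSum_nat_add_iff (f := fun n : ℕ => 1/(n:ℝ)^2) 1).mpr (by simpa using h1)
    refine this.congr_fun fun n => ?_
    push_cast; ring_nf
  have h4 : HasSum (fun n : ℤ => 1/(n:ℝ)^2) (π^2/6 + π^2/6) := by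
    refine HasSum.of_nat_of_neg_add_one (f := fun n : ℤ => 1/(n:ℝ)^2) ?_ ?_
    · exact h1.congr_fun fun n => by push_cast; ring_nf
    · exact h3.congr_fun fun n => by push_cast; ring_nf
  have he : π^2/6 + π^2/6 = π^2/3 := by ring
  rwa [he] at h4

theorem stmt13 (M C : ℝ) (hM : 0 < M) (hC : 0 < C) :
    ∃ C' C'' : ℝ, 0 < C' ∧ 0 < C'' ∧
      ∀ (k : ℕ) (E₀ δ δstar : ℝ) (a f : ℤ → EuclideanSpace ℂ (Fin (k+1))),
        0 < E₀ → E₀ ≤ M → 0 < δ → δ < 1 →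
        δstar = ⨅ n : ℕ, |E₀ - 2*π*(n:ℝ)^2| → 0 < δstar →
        (∀ n : ℤ, ((E₀/(2*π) - (n:ℝ)^2 : ℝ)) • a n = f n) →
        (∀ (n : ℤ) (i : Fin (k+1)), (a n i).im = 0 ∧ (f n i).im = 0) →
        (∀ n : ℤ, ‖f n‖ ≤ C * δ) →
        ((∀ n : ℤ, n ≠ 0 → ‖a n‖ ≤ C' * δ / (δstar * (n:ℝ)^2)) ∧
          ((∀ x : ℝ,
              (1/2 : ℝ) ≤ ‖∑' n : ℤ, Complex.exp ((n : ℂ) * (x : ℂ) * Complex.I) • a n‖) →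
            δstar ≤ C'' * δ)) := by
  have hπ : (0:ℝ) < π := Real.pi_pos
  refine ⟨2*C*M, 2*(2*π*C*1 + 2*C*M*(π^2/3)), by positivity, by positivity, ?_⟩
  intro k E₀ δ δstar a f hE₀ hEM hδ hδ1 hδstar hδstar_pos ha him hf
  have hbdd : BddBelow (Set.range fun n : ℕ => |E₀ - 2*π*(n:ℝ)^2|) := by
    refine ⟨0, ?_⟩; rintro x ⟨n, rfl⟩; positivity
  have hstar_le : ∀ n : ℤ, δstar ≤ |E₀ - 2*π*(n:ℝ)^2| := by
    intro n
    have := ciInf_le hbdd n.natAbs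
    rw [← hδstar] at this
    have hcast : ((n.natAbs : ℕ) : ℝ)^2 = ((n:ℝ))^2 := by
      simp [Nat.cast_natAbs, Int.cast_abs, sq_abs]
    rwa [hcast] at this
  have hstarE : δstar ≤ E₀ := by
    have := hstar_le 0
    simpa [abs_of_pos hE₀] using this
  have hstarM : δstar ≤ M := hstarE.trans hEM
  have key : ∀ n : ℤ, ‖a n‖ * |E₀ - 2*π*(n:ℝ)^2| ≤ 2*π*(C*δ) := by
    intro n
    have h1 : ‖f n‖ = |E₀/(2*π) - (n:ℝ)^2| * ‖a n‖ := by
      rw [← ha n, norm_smul, Real.norm_eq_abs]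
    have heq : (2*π) * (E₀/(2*π) - (n:ℝ)^2) = E₀ - 2*π*(n:ℝ)^2 := by
      field_simp
    have h2 : |E₀ - 2*π*(n:ℝ)^2| = (2*π) * |E₀/(2*π) - (n:ℝ)^2| := by
      rw [← heq, abs_mul, abs_of_pos (by positivity : (0:ℝ) < 2*π)]
    rw [h2]
    calc ‖a n‖ * ((2*π) * |E₀/(2*π) - (n:ℝ)^2|) = (2*π) * ‖f n‖ := by rw [h1]; ring
      _ ≤ 2*π*(C*δ) := by
          have := hf n
          nlinarith
  have hcomp : ∀ n : ℤ, δstar * (n:ℝ)^2 ≤ (M/π) * |E₀ - 2*π*(n:ℝ)^2| := by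
    intro n
    rcases le_or_gt ((n:ℝ)^2) (M/π) with h | h
    · calc δstar * (n:ℝ)^2 ≤ |E₀ - 2*π*(n:ℝ)^2| * (M/π) :=
            mul_le_mul (hstar_le n) h (by positivity) (abs_nonneg _)
        _ = (M/π) * |E₀ - 2*π*(n:ℝ)^2| := by ring
    · have hn2 : M < π * (n:ℝ)^2 := by
        rw [div_lt_iff₀ hπ] at h; nlinarith
      have habs : π * (n:ℝ)^2 ≤ |E₀ - 2*π*(n:ℝ)^2| := by
        rw [abs_sub_comm, le_abs]
        left
        nlinarith
      calc δstar * (n:ℝ)^2 ≤ M * (n:ℝ)^2 := by nlinarith [sq_nonneg ((n:ℝ))]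
        _ = (M/π) * (π * (n:ℝ)^2) := by field_simp
        _ ≤ (M/π) * |E₀ - 2*π*(n:ℝ)^2| := by
            apply mul_le_mul_of_nonneg_left habs (by positivity)
  have hprod : ∀ n : ℤ, ‖a n‖ * (δstar * (n:ℝ)^2) ≤ 2*C*M * δ := by
    intro n
    calc ‖a n‖ * (δstar * (n:ℝ)^2) ≤ ‖a n‖ * ((M/π) * |E₀ - 2*π*(n:ℝ)^2|) :=
          mul_le_mul_of_nonneg_left (hcomp n) (norm_nonneg _)
      _ = (M/π) * (‖a n‖ * |E₀ - 2*π*(n:ℝ)^2|) := by ring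
      _ ≤ (M/π) * (2*π*(C*δ)) := mul_le_mul_of_nonneg_left (key n) (by positivity)
      _ = 2*C*M * δ := by field_simp
  have hmain : ∀ n : ℤ, n ≠ 0 → ‖a n‖ ≤ 2*C*M * δ / (δstar * (n:ℝ)^2) := by
    intro n hn
    have hn2 : (0:ℝ) < (n:ℝ)^2 := by
      have : (n:ℝ) ≠ 0 := Int.cast_ne_zero.mpr hn
      positivity
    rw [le_div_iff₀ (by positivity)]
    exact hprod n
  refine ⟨hmain, ?_⟩
  intro hφ
  have ha0 : ‖a 0‖ ≤ δ/δstar * (2*π*C) := by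
    have h0 := key 0
    simp only [Int.cast_zero, ne_eq, OfNat.ofNat_ne_zero, not_false_eq_true, zero_pow,
      mul_zero, sub_zero, abs_of_pos hE₀] at h0
    have h1 : ‖a 0‖ * δstar ≤ 2*π*(C*δ) :=
      le_trans (mul_le_mul_of_nonneg_left hstarE (norm_nonneg _)) h0
    rw [← le_div_iff₀ hδstar_pos] at h1
    calc ‖a 0‖ ≤ 2*π*(C*δ) / δstar := h1
      _ = δ/δstar * (2*π*C) := by ring
  set b : ℤ → ℝ :=
    fun n => δ/δstar * (2*π*C * (if n = 0 then (1:ℝ) else 0) + 2*C*M * (1/(n:ℝ)^2))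
    with hb_def
  have hbound : ∀ n : ℤ, ‖a n‖ ≤ b n := by
    intro n
    by_cases hn : n = 0
    · subst hn
      have hb0 : b 0 = δ/δstar * (2*π*C) := by
        simp [hb_def]
      rw [hb0]
      exact ha0
    · have hn2 : (0:ℝ) < (n:ℝ)^2 := by
        have : (n:ℝ) ≠ 0 := Int.cast_ne_zero.mpr hn
        positivity
      have hbn : b n = δ/δstar * (2*C*M * (1/(n:ℝ)^2)) := by
        simp [hb_def, hn]
      calc ‖a n‖ ≤ 2*C*M * δ / (δstar * (n:ℝ)^2) := hmain n hn
        _ = δ/δstar * (2*C*M * (1/(n:ℝ)^2)) := by field_simp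
        _ = b n := hbn.symm
  have hS : HasSum b (δ/δstar * (2*π*C*1 + 2*C*M*(π^2/3))) := by
    have hs1 : HasSum (fun n : ℤ => if n = 0 then (1:ℝ) else 0) 1 := hasSum_ite_eq 0 1
    exact ((hs1.mul_left (2*π*C)).add (stmt13_zsum.mul_left (2*C*M))).mul_left (δ/δstar)
  have hsummable_norm : Summable fun n : ℤ => ‖a n‖ :=
    hS.summable.of_nonneg_of_le (fun n => norm_nonneg _) hbound
  have htsum_le : ∑' n : ℤ, ‖a n‖ ≤ δ/δstar * (2*π*C*1 + 2*C*M*(π^2/3)) := by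
    rw [← hS.tsum_eq]
    exact Summable.tsum_le_tsum hbound hsummable_norm hS.summable
  have hx := hφ 0
  simp only [Complex.ofReal_zero, mul_zero, zero_mul, Complex.exp_zero, one_smul] at hx
  have h12 : (1/2:ℝ) ≤ ∑' n : ℤ, ‖a n‖ :=
    hx.trans (norm_tsum_le_tsum_norm hsummable_norm)
  have hfin : (1/2:ℝ) ≤ δ/δstar * (2*π*C*1 + 2*C*M*(π^2/3)) := h12.trans htsum_le
  have h' : δstar * (1/2) ≤ δstar * (δ/δstar * (2*π*C*1 + 2*C*M*(π^2/3))) :=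
    mul_le_mul_of_nonneg_left hfin hδstar_pos.le
  have he : δstar * (δ/δstar * (2*π*C*1 + 2*C*M*(π^2/3))) = δ * (2*π*C*1 + 2*C*M*(π^2/3)) := by
    field_simp
  rw [he] at h'
  calc δstar = 2*(δstar*(1/2)) := by ring
    _ ≤ 2*(δ * (2*π*C*1 + 2*C*M*(π^2/3))) := by linarith
    _ = 2*(2*π*C*1 + 2*C*M*(π^2/3)) * δ := by ring
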